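/- There exists an absolute constant C > 0 such that the following holds. Let α ∈ (0,1] and n = 1 + ⌈√(1/α)⌉, and consider the Correlation Clustering instance on vertices v_0, …, v_{n−1} in which the path edges (v_i, v_{i+1}) for 0 ≤ i ≤ n−2 are positive with weight 1, the edge (v_0, v_{n−1}) is negative with weight 1, and every other pair is a positive edge of weight α. Then the assignment x_{v_i v_j} = |i − j|/(n − 1) is a feasible CP solution (it is symmetric, takes values in [0,1], vanishes on the diagonal, and satisfies the triangle inequality), its cost vector satisfies y_u ≤ 2/(n−1) + α·n for every vertex u, and for every p ≥ 1, ‖y‖_p ≤ C·α^{1/2 − 1/(2p)}. -/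

import Mathlib

open scoped Classical

/-- The negative edges of the integrality-gap instance: the single edge `{v₀, v_{n−1}}`. -/
def pathNeg (n : ℕ) (i j : Fin n) : Prop :=
  (i.val = 0 ∧ j.val = n - 1) ∨ (j.val = 0 ∧ i.val = n - 1)

/-- Edge weights of the integrality-gap instance: path edges `(v_i, v_{i+1})` have weight 1,
the edge `{v₀, v_{n−1}}` has weight 1, and all other pairs have weight `α`. -/
noncomputable def pathW (α : ℝ) (n : ℕ) (i j : Fin n) : ℝ :=
  if i.val + 1 = j.val ∨ j.val + 1 = i.val then 1
  else if pathNeg n i j then 1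
  else α

/-- The CP cost `y_u` of vertex `u` for the fractional solution `x`. -/
noncomputable def cpCost {V : Type} [Fintype V] (w : V → V → ℝ) (neg : V → V → Prop)
    (x : V → V → ℝ) (u : V) : ℝ :=
  ∑ v : V, if v = u then 0 else
    if neg u v then w u v * (1 - x u v) else w u v * x u v

/-- Feasibility of a CP solution: symmetric, zero on the diagonal, values in `[0,1]`,
and satisfying the triangle inequality. -/
def CPFeasible {V : Type} (x : V → V → ℝ) : Prop :=
  (∀ u v, x u v = x v u) ∧ (∀ u, x u u = 0) ∧ (∀ u v, 0 ≤ x u v ∧ x u v ≤ 1) ∧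
    (∀ u v t, x u t ≤ x u v + x v t)

private lemma sum_ite_le {n : ℕ} (P : Fin n → Prop) [DecidablePred P] (c : ℝ) (hc : 0 ≤ c)
    (h : ∀ a b, P a → P b → a = b) : ∑ v : Fin n, (if P v then c else 0) ≤ c := by
  rw [← Finset.sum_filter, Finset.sum_const, nsmul_eq_mul]
  have hcard : (Finset.univ.filter P).card ≤ 1 :=
    Finset.card_le_one.mpr fun a ha b hb =>
      h a b (Finset.mem_filter.mp ha).2 (Finset.mem_filter.mp hb).2
  calc ((Finset.univ.filter P).card : ℝ) * c ≤ 1 * c := by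
        apply mul_le_mul_of_nonneg_right _ hc
        exact_mod_cast hcard
    _ = c := one_mul c

/-- There is an absolute constant `C > 0` such that for every
`α ∈ (0,1]`, with `n = 1 + ⌈√(1/α)⌉`, in the integrality-gap instance on `v₀, …, v_{n−1}`
the assignment `x_{ij} = |i − j|/(n − 1)` is a feasible CP solution, its cost vector
satisfies `y_u ≤ 2/(n−1) + α n` for every `u`, and `‖y‖_p ≤ C α^{1/2 − 1/(2p)}`
for every `p ≥ 1`. -/
theorem stmt16 :
    ∃ C : ℝ, 0 < C ∧
      ∀ α : ℝ, α ∈ Set.Ioc (0 : ℝ) 1 →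
      ∀ n : ℕ, n = 1 + ⌈Real.sqrt (1 / α)⌉₊ →
      ∀ x : Fin n → Fin n → ℝ,
        (∀ i j : Fin n, x i j = |(i.val : ℝ) - (j.val : ℝ)| / ((n : ℝ) - 1)) →
        CPFeasible x ∧
        (∀ u : Fin n, cpCost (pathW α n) (pathNeg n) x u ≤ 2 / ((n : ℝ) - 1) + α * n) ∧
        ∀ p : ℝ, 1 ≤ p →
          (∑ u : Fin n, cpCost (pathW α n) (pathNeg n) x u ^ p) ^ (1 / p)
            ≤ C * α ^ ((1 : ℝ) / 2 - 1 / (2 * p)) := by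
  refine ⟨15, by norm_num, ?_⟩
  intro α hα n hn x hx
  obtain ⟨hα0, hα1⟩ := hα
  have hαinv : (1 : ℝ) ≤ 1 / α := by rw [le_div_iff₀ hα0]; linarith
  have hs0 : (0 : ℝ) < Real.sqrt (1 / α) := Real.sqrt_pos.mpr (by linarith)
  have hm1 : 1 ≤ ⌈Real.sqrt (1 / α)⌉₊ := Nat.one_le_ceil_iff.mpr hs0
  have hn2 : 2 ≤ n := by omega
  have hn2' : (2 : ℝ) ≤ (n : ℝ) := by exact_mod_cast hn2
  have hd : (0 : ℝ) < (n : ℝ) - 1 := by linarith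
  have hnd : ((n - 1 : ℕ) : ℝ) = (n : ℝ) - 1 := by
    rw [Nat.cast_sub (by omega)]; norm_num
  have hvlt : ∀ i : Fin n, (i.val : ℝ) ≤ (n : ℝ) - 1 := by
    intro i
    have h1 : i.val + 1 ≤ n := i.isLt
    have h2 : ((i.val : ℝ)) + 1 ≤ (n : ℝ) := by exact_mod_cast h1
    linarith
  have hx01 : ∀ i j : Fin n, 0 ≤ x i j ∧ x i j ≤ 1 := by
    intro i j
    rw [hx]
    constructor
    · exact div_nonneg (abs_nonneg _) hd.le
    · rw [div_le_one hd]
      have hi := hvlt i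
      have hj := hvlt j
      have hi0 : (0 : ℝ) ≤ (i.val : ℝ) := Nat.cast_nonneg _
      have hj0 : (0 : ℝ) ≤ (j.val : ℝ) := Nat.cast_nonneg _
      rw [abs_le]
      constructor <;> linarith
  -- cost bound
  have hcost : ∀ u : Fin n, cpCost (pathW α n) (pathNeg n) x u ≤ 2 / ((n : ℝ) - 1) + α * n := by
    intro u
    have hpt : ∀ v : Fin n,
        (if v = u then 0 else
          if pathNeg n u v then pathW α n u v * (1 - x u v) else pathW α n u v * x u v)
        ≤ (if v.val + 1 = u.val then 1 / ((n : ℝ) - 1) else 0) +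
          ((if u.val + 1 = v.val then 1 / ((n : ℝ) - 1) else 0) + α) := by
      intro v
      have hg1 : (0 : ℝ) ≤ (if v.val + 1 = u.val then 1 / ((n : ℝ) - 1) else 0) := by
        split_ifs
        · positivity
        · exact le_rfl
      have hg2 : (0 : ℝ) ≤ (if u.val + 1 = v.val then 1 / ((n : ℝ) - 1) else 0) := by
        split_ifs
        · positivity
        · exact le_rfl
      by_cases hvu : v = u
      · rw [if_pos hvu]; linarith
      rw [if_neg hvu]
      by_cases hneg : pathNeg n u v
      · rw [if_pos hneg]
        have hx1 : x u v = 1 := by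
          rcases hneg with ⟨h0, h1⟩ | ⟨h0, h1⟩ <;>
          · rw [hx, h0, h1, hnd] <;> try rw [hnd]
            simp only [Nat.cast_zero, zero_sub, abs_neg, sub_zero, abs_of_pos hd,
              abs_of_nonneg hd.le]
            exact div_self hd.ne'
        rw [hx1]
        simp only [sub_self, mul_zero]
        linarith
      rw [if_neg hneg]
      by_cases hpe : u.val + 1 = v.val ∨ v.val + 1 = u.val
      · have hw : pathW α n u v = 1 := by unfold pathW; rw [if_pos hpe]
        rcases hpe with h | h
        · have hxv : x u v = 1 / ((n : ℝ) - 1) := by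
            rw [hx]
            have : (v.val : ℝ) = (u.val : ℝ) + 1 := by exact_mod_cast h.symm
            rw [this]
            rw [show (u.val : ℝ) - ((u.val : ℝ) + 1) = -1 by ring]
            norm_num
          rw [hw, hxv, one_mul, if_pos h, if_neg (by omega : ¬ v.val + 1 = u.val)]
          linarith
        · have hxv : x u v = 1 / ((n : ℝ) - 1) := by
            rw [hx]
            have : (u.val : ℝ) = (v.val : ℝ) + 1 := by exact_mod_cast h.symm
            rw [this]
            rw [show (v.val : ℝ) + 1 - (v.val : ℝ) = 1 by ring]
            norm_num
          rw [hw, hxv, one_mul, if_pos h, if_neg (by omega : ¬ u.val + 1 = v.val)]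
          linarith
      · have hw : pathW α n u v = α := by unfold pathW; rw [if_neg hpe, if_neg hneg]
        rw [hw]
        have := mul_le_of_le_one_right hα0.le (hx01 u v).2
        linarith
    have hsum1 : ∑ v : Fin n, (if v.val + 1 = u.val then 1 / ((n : ℝ) - 1) else 0)
        ≤ 1 / ((n : ℝ) - 1) := by
      apply sum_ite_le _ _ (by positivity)
      intro a b ha hb
      exact Fin.ext (by omega)
    have hsum2 : ∑ v : Fin n, (if u.val + 1 = v.val then 1 / ((n : ℝ) - 1) else 0)
        ≤ 1 / ((n : ℝ) - 1) := by
      apply sum_ite_le _ _ (by positivity)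
      intro a b ha hb
      exact Fin.ext (by omega)
    calc cpCost (pathW α n) (pathNeg n) x u
        = ∑ v : Fin n, (if v = u then 0 else
            if pathNeg n u v then pathW α n u v * (1 - x u v) else pathW α n u v * x u v) := by
          unfold cpCost
          exact Finset.sum_congr rfl fun v _ => by split_ifs <;> rfl
      _ ≤ ∑ v : Fin n, ((if v.val + 1 = u.val then 1 / ((n : ℝ) - 1) else 0) +
            ((if u.val + 1 = v.val then 1 / ((n : ℝ) - 1) else 0) + α)) :=
          Finset.sum_le_sum fun v _ => hpt v
      _ = (∑ v : Fin n, (if v.val + 1 = u.val then 1 / ((n : ℝ) - 1) else 0)) +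
            ((∑ v : Fin n, (if u.val + 1 = v.val then 1 / ((n : ℝ) - 1) else 0)) +
              ∑ _v : Fin n, α) := by
          rw [Finset.sum_add_distrib, Finset.sum_add_distrib]
      _ ≤ 1 / ((n : ℝ) - 1) + (1 / ((n : ℝ) - 1) + n * α) := by
          have : ∑ _v : Fin n, α = (n : ℝ) * α := by
            rw [Finset.sum_const, Finset.card_univ, Fintype.card_fin, nsmul_eq_mul]
          rw [this]
          linarith
      _ = 2 / ((n : ℝ) - 1) + α * n := by ring
  refine ⟨⟨?_, ?_, hx01, ?_⟩, hcost, ?_⟩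
  · intro u v; rw [hx, hx, abs_sub_comm]
  · intro u; rw [hx]; simp
  · intro u v t
    rw [hx, hx, hx, ← add_div]
    exact div_le_div_of_nonneg_right (abs_sub_le _ _ _) hd.le
  -- the ℓ_p bound
  intro p hp
  have hp0 : (0 : ℝ) < p := lt_of_lt_of_le one_pos hp
  have hy0 : ∀ u : Fin n, 0 ≤ cpCost (pathW α n) (pathNeg n) x u := by
    intro u
    apply Finset.sum_nonneg
    intro v _
    have hw : 0 ≤ pathW α n u v := by
      unfold pathW; split_ifs <;> linarith
    split_ifs with h1 h2
    · exact le_rfl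
    · exact mul_nonneg hw (by linarith [(hx01 u v).2])
    · exact mul_nonneg hw (hx01 u v).1
  set B : ℝ := 2 / ((n : ℝ) - 1) + α * n with hB
  have hB0 : 0 < B := by
    rw [hB]
    have : (0 : ℝ) < α * n := by positivity
    have h2 : (0 : ℝ) < 2 / ((n : ℝ) - 1) := by positivity
    linarith
  -- numeric facts
  have hsq : Real.sqrt (1 / α) = α ^ (-(1 / 2 : ℝ)) := by
    rw [Real.sqrt_eq_rpow, one_div, Real.inv_rpow hα0.le, ← Real.rpow_neg hα0.le]
  have hml : α ^ (-(1 / 2 : ℝ)) ≤ (n : ℝ) - 1 := by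
    have h1 : Real.sqrt (1 / α) ≤ (⌈Real.sqrt (1 / α)⌉₊ : ℝ) := Nat.le_ceil _
    have h2 : ((n - 1 : ℕ) : ℝ) = (⌈Real.sqrt (1 / α)⌉₊ : ℝ) := by
      norm_cast; omega
    rw [← hsq, ← hnd, h2]; exact h1
  have hα_ge1 : (1 : ℝ) ≤ α ^ (-(1 / 2 : ℝ)) := by
    exact Real.one_le_rpow_of_pos_of_le_one_of_nonpos hα0 hα1 (by norm_num)
  have hnu : (n : ℝ) ≤ 3 * α ^ (-(1 / 2 : ℝ)) := by
    have h1 : ((⌈Real.sqrt (1 / α)⌉₊ : ℕ) : ℝ) < Real.sqrt (1 / α) + 1 :=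
      Nat.ceil_lt_add_one hs0.le
    have h2 : (n : ℝ) = (⌈Real.sqrt (1 / α)⌉₊ : ℝ) + 1 := by
      rw [hn]; push_cast; ring
    rw [h2, ← hsq] at *
    linarith
  have hdinv : 1 / ((n : ℝ) - 1) ≤ α ^ ((1 : ℝ) / 2) := by
    have hpos : (0 : ℝ) < α ^ (-(1 / 2 : ℝ)) := Real.rpow_pos_of_pos hα0 _
    have h1 : 1 / ((n : ℝ) - 1) ≤ 1 / α ^ (-(1 / 2 : ℝ)) :=
      one_div_le_one_div_of_le hpos hml
    have h2 : 1 / α ^ (-(1 / 2 : ℝ)) = α ^ ((1 : ℝ) / 2) := by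
      rw [Real.rpow_neg hα0.le, one_div, inv_inv]
    linarith [h2 ▸ h1]
  have hkey : α * α ^ (-(1 / 2 : ℝ)) = α ^ ((1 : ℝ) / 2) := by
    have h := Real.rpow_add hα0 1 (-(1 / 2 : ℝ))
    rw [Real.rpow_one] at h
    rw [← h]; norm_num
  have hBu : B ≤ 5 * α ^ ((1 : ℝ) / 2) := by
    have h1 : α * (n : ℝ) ≤ α * (3 * α ^ (-(1 / 2 : ℝ))) :=
      mul_le_mul_of_nonneg_left hnu hα0.le
    have h2 : α * (3 * α ^ (-(1 / 2 : ℝ))) = 3 * α ^ ((1 : ℝ) / 2) := by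
      rw [← hkey]; ring
    have h3 : 2 / ((n : ℝ) - 1) = 2 * (1 / ((n : ℝ) - 1)) := by ring
    rw [hB]
    calc 2 / ((n : ℝ) - 1) + α * n ≤ 2 * α ^ ((1 : ℝ) / 2) + 3 * α ^ ((1 : ℝ) / 2) := by
          rw [h3]; linarith [h2 ▸ h1]
      _ = 5 * α ^ ((1 : ℝ) / 2) := by ring
  -- main chain
  have hsum : ∑ u : Fin n, cpCost (pathW α n) (pathNeg n) x u ^ p ≤ (n : ℝ) * B ^ p := by
    calc ∑ u : Fin n, cpCost (pathW α n) (pathNeg n) x u ^ p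
        ≤ ∑ _u : Fin n, B ^ p :=
          Finset.sum_le_sum fun u _ => Real.rpow_le_rpow (hy0 u) (hcost u) hp0.le
      _ = (n : ℝ) * B ^ p := by
          rw [Finset.sum_const, Finset.card_univ, Fintype.card_fin, nsmul_eq_mul]
  have hexp1 : (-(1 / 2 : ℝ)) * (1 / p) = -(1 / (2 * p)) := by
    field_simp
  have h3p : (3 : ℝ) ^ (1 / p : ℝ) ≤ 3 := by
    calc (3 : ℝ) ^ (1 / p : ℝ) ≤ (3 : ℝ) ^ (1 : ℝ) :=
          Real.rpow_le_rpow_of_exponent_le (by norm_num) ((div_le_one hp0).mpr hp)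
      _ = 3 := Real.rpow_one 3
  calc (∑ u : Fin n, cpCost (pathW α n) (pathNeg n) x u ^ p) ^ (1 / p : ℝ)
      ≤ ((n : ℝ) * B ^ p) ^ (1 / p : ℝ) := by
        apply Real.rpow_le_rpow _ hsum (by positivity)
        exact Finset.sum_nonneg fun u _ => Real.rpow_nonneg (hy0 u) p
    _ = (n : ℝ) ^ (1 / p : ℝ) * B := by
        rw [Real.mul_rpow (Nat.cast_nonneg n) (Real.rpow_nonneg hB0.le p)]
        congr 1
        rw [← Real.rpow_mul hB0.le, mul_one_div_cancel hp0.ne', Real.rpow_one]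
    _ ≤ (3 * α ^ (-(1 / 2 : ℝ))) ^ (1 / p : ℝ) * (5 * α ^ ((1 : ℝ) / 2)) := by
        apply mul_le_mul _ hBu hB0.le (Real.rpow_nonneg (by positivity) _)
        exact Real.rpow_le_rpow (Nat.cast_nonneg n) hnu (by positivity)
    _ ≤ (3 * α ^ (-(1 / (2 * p)) : ℝ)) * (5 * α ^ ((1 : ℝ) / 2)) := by
        apply mul_le_mul_of_nonneg_right _ (by positivity)
        rw [Real.mul_rpow (by norm_num) (Real.rpow_nonneg hα0.le _)]
        apply mul_le_mul h3p _ (Real.rpow_nonneg (Real.rpow_nonneg hα0.le _) _) (by norm_num)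
        rw [← Real.rpow_mul hα0.le, hexp1]
    _ = 15 * α ^ ((1 : ℝ) / 2 - 1 / (2 * p)) := by
        rw [show ((1 : ℝ) / 2 - 1 / (2 * p)) = -(1 / (2 * p)) + (1 : ℝ) / 2 by ring,
          Real.rpow_add hα0]
        ring
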